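/- Let d ≥ 1 be an integer, let 0 ≤ j < k ≤ d, and let δ₁, δ₂ be integers with 0 ≤ δ₁ ≤ j and 0 ≤ δ₂ ≤ d−k. Let z be a complex number with Im z > 0 and let l ≥ 1 be an integer. Then: (1) if A(j−δ₁, k+δ₂; z) ≥ (l+δ₁+δ₂)π then A(j,k;z) ≥ lπ; (2) if A(j,k;z) ≥ lπ and l−δ₁−δ₂ ≥ 1 and j+δ₁ < k−δ₂ then A(j+δ₁, k−δ₂; z) ≥ (l−δ₁−δ₂)π; (3) if j+δ₁ < k−δ₂ and A(j+δ₁, k−δ₂; z) ≥ lπ then A(j,k;z) ≥ lπ; (4) if A(j,k;z) ≥ lπ then A(j−δ₁, k+δ₂; z) ≥ lπ. -/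

import Mathlib

lemma core (x₁ x₂ y a b : ℝ) (hy : 0 < y) (hx : x₁ < x₂) (ha : a^2 = x₁^2 + y^2)
    (hb : b^2 = x₂^2 + y^2) (ha0 : 0 < a) (hb0 : 0 < b) : x₁ * b < x₂ * a := by
  rcases le_or_gt 0 x₁ with h1 | h1
  · have hx2 : x₁^2 < x₂^2 := by nlinarith
    have hsq : (x₁*b)^2 < (x₂*a)^2 := by nlinarith [mul_pos hy hy]
    exact lt_of_pow_lt_pow_left₀ 2 (mul_pos (h1.trans_lt hx) ha0).le hsq
  rcases le_or_gt x₂ 0 with h2 | h2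
  · have hx2 : x₂^2 < x₁^2 := by nlinarith
    have hsq : (-(x₂*a))^2 < (-(x₁*b))^2 := by ring_nf; nlinarith [mul_pos hy hy]
    have := lt_of_pow_lt_pow_left₀ 2 (by nlinarith [mul_pos (neg_pos.2 h1) hb0] : (0:ℝ) ≤ -(x₁*b)) hsq
    linarith
  · nlinarith [mul_pos h2 ha0, mul_pos (neg_pos.2 h1) hb0]

lemma ratio_mem (w : ℂ) (hw : w ≠ 0) : w.re / ‖w‖ ∈ Set.Icc (-1 : ℝ) 1 := by
  have h0 : 0 < ‖w‖ := norm_pos_iff.mpr hw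
  constructor
  · rw [le_div_iff₀ h0, neg_one_mul, neg_le]
    calc -w.re ≤ |w.re| := neg_le_abs _
    _ ≤ ‖w‖ := Complex.abs_re_le_norm w
  · rw [div_le_one h0]
    exact (le_abs_self w.re).trans (Complex.abs_re_le_norm w)

lemma arg_lt_arg_of (w w' : ℂ) (him : w.im = w'.im) (hy : 0 < w.im) (hre : w.re < w'.re) :
    Complex.arg w' < Complex.arg w := by
  have hy' : 0 < w'.im := him ▸ hy
  have hw : w ≠ 0 := fun h => by simp [h] at hy
  have hw' : w' ≠ 0 := fun h => by simp [h] at hy'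
  have ha0 : 0 < ‖w‖ := norm_pos_iff.mpr hw
  have hb0 : 0 < ‖w'‖ := norm_pos_iff.mpr hw'
  rw [Complex.arg_of_im_pos hy, Complex.arg_of_im_pos hy']
  apply Real.strictAntiOn_arccos (ratio_mem w hw) (ratio_mem w' hw')
  rw [div_lt_div_iff₀ ha0 hb0]
  apply core w.re w'.re w.im _ _ hy hre _ _ ha0 hb0
  · rw [Complex.sq_norm, Complex.normSq_apply]; ring
  · rw [Complex.sq_norm, Complex.normSq_apply, ← him]; ring

/-- The angle sum `A(j,k;z) = Σ_{m=j}^{k-1} (arg(z-m) - arg(z+d-m))`. -/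
noncomputable def angleSum (d j k : ℕ) (z : ℂ) : ℝ :=
  ∑ m ∈ Finset.Icc j (k - 1), (Complex.arg (z - m) - Complex.arg (z + d - m))

lemma term_pos (d m : ℕ) (hm : m < d) (z : ℂ) (hz : 0 < z.im) :
    0 < Complex.arg (z - m) - Complex.arg (z + d - m) := by
  have := arg_lt_arg_of (z - m) (z + d - m) (by simp) (by simpa using hz)
    (by simp; exact_mod_cast Nat.zero_lt_of_lt hm)
  linarith

lemma term_lt (d m : ℕ) (z : ℂ) (hz : 0 < z.im) :
    Complex.arg (z - m) - Complex.arg (z + d - m) < Real.pi := by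
  have h1 : Complex.arg (z - m) ≤ Real.pi := Complex.arg_le_pi _
  have him : 0 < (z + d - m).im := by simpa using hz
  have h2 : 0 ≤ Complex.arg (z + d - m) := Complex.arg_nonneg_iff.2 him.le
  have h3 : Complex.arg (z + d - m) ≠ 0 := fun h => by
    have := (Complex.arg_eq_zero_iff.1 h).2; linarith
  have : 0 < Complex.arg (z + d - m) := h2.lt_of_ne (Ne.symm h3)
  linarith

lemma angleSum_mono (d j k j' k' : ℕ) (hj' : j' ≤ j) (hjk : j < k) (hkk' : k ≤ k')
    (hk'd : k' ≤ d) (z : ℂ) (hz : 0 < z.im) :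
    angleSum d j k z ≤ angleSum d j' k' z ∧
    angleSum d j' k' z ≤ angleSum d j k z + (((k' - j') - (k - j) : ℕ) : ℝ) * Real.pi := by
  set f : ℕ → ℝ := fun m => Complex.arg (z - m) - Complex.arg (z + d - m) with hf
  have hAB : Finset.Icc j (k - 1) ⊆ Finset.Icc j' (k' - 1) :=
    Finset.Icc_subset_Icc hj' (by omega)
  have hsplit : angleSum d j' k' z
      = ∑ m ∈ Finset.Icc j' (k' - 1) \ Finset.Icc j (k - 1), f m + angleSum d j k z :=
    (Finset.sum_sdiff hAB).symm
  have hcard : (Finset.Icc j' (k' - 1) \ Finset.Icc j (k - 1)).card = (k' - j') - (k - j) := by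
    rw [Finset.card_sdiff_of_subset hAB, Nat.card_Icc, Nat.card_Icc]; omega
  have hpos : ∀ m ∈ Finset.Icc j' (k' - 1) \ Finset.Icc j (k - 1), 0 ≤ f m := by
    intro m hm
    have hm' := Finset.mem_sdiff.1 hm
    have : m < d := by
      have := (Finset.mem_Icc.1 hm'.1).2; omega
    exact (term_pos d m this z hz).le
  constructor
  · rw [hsplit]
    have := Finset.sum_nonneg hpos
    linarith
  · rw [hsplit, ← hcard]
    have : ∑ m ∈ Finset.Icc j' (k' - 1) \ Finset.Icc j (k - 1), f m
        ≤ (Finset.Icc j' (k' - 1) \ Finset.Icc j (k - 1)).card • Real.pi :=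
      Finset.sum_le_card_nsmul _ _ _ (fun m _ => (term_lt d m z hz).le)
    rw [nsmul_eq_mul] at this
    linarith

/-- The nested inclusions (19) and (20) of Proposition 4.7, expressed via the
angle-sum description of the regions `cl 𝒟_{j,k;l}` in the upper half-plane. -/
theorem stmt_13 (d j k δ₁ δ₂ l : ℕ) (hd : 1 ≤ d) (hjk : j < k) (hkd : k ≤ d)
    (hδ₁ : δ₁ ≤ j) (hδ₂ : δ₂ ≤ d - k) (hl : 1 ≤ l)
    (z : ℂ) (hz : 0 < z.im) :
    (((l + δ₁ + δ₂ : ℕ) : ℝ) * Real.pi ≤ angleSum d (j - δ₁) (k + δ₂) z →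
        (l : ℝ) * Real.pi ≤ angleSum d j k z)
    ∧ ((l : ℝ) * Real.pi ≤ angleSum d j k z → 1 ≤ l - δ₁ - δ₂ → j + δ₁ < k - δ₂ →
        ((l - δ₁ - δ₂ : ℕ) : ℝ) * Real.pi ≤ angleSum d (j + δ₁) (k - δ₂) z)
    ∧ (j + δ₁ < k - δ₂ → (l : ℝ) * Real.pi ≤ angleSum d (j + δ₁) (k - δ₂) z →
        (l : ℝ) * Real.pi ≤ angleSum d j k z)
    ∧ ((l : ℝ) * Real.pi ≤ angleSum d j k z →
        (l : ℝ) * Real.pi ≤ angleSum d (j - δ₁) (k + δ₂) z) := by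
  have hπ := Real.pi_pos
  have hbig := angleSum_mono d j k (j - δ₁) (k + δ₂) (by omega) hjk (by omega) (by omega) z hz
  have hc1 : ((k + δ₂ - (j - δ₁)) - (k - j) : ℕ) = δ₁ + δ₂ := by omega
  rw [hc1] at hbig
  refine ⟨?_, ?_, ?_, ?_⟩
  · intro h
    have : (((l + δ₁ + δ₂ : ℕ) : ℝ)) = (l : ℝ) + (((δ₁ + δ₂ : ℕ) : ℝ)) := by push_cast; ring
    nlinarith [hbig.2]
  · intro h hl' hlt
    have hsm := angleSum_mono d (j + δ₁) (k - δ₂) j k (by omega) hlt (by omega) hkd z hz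
    have hc2 : ((k - j) - ((k - δ₂) - (j + δ₁)) : ℕ) = δ₁ + δ₂ := by omega
    rw [hc2] at hsm
    have hcast : (((l - δ₁ - δ₂ : ℕ) : ℝ)) + (((δ₁ + δ₂ : ℕ) : ℝ)) = (l : ℝ) := by
      have : (l - δ₁ - δ₂ : ℕ) + (δ₁ + δ₂) = l := by omega
      exact_mod_cast congrArg (Nat.cast : ℕ → ℝ) this
    nlinarith [hsm.2]
  · intro hlt h
    have hsm := angleSum_mono d (j + δ₁) (k - δ₂) j k (by omega) hlt (by omega) hkd z hz
    linarith [hsm.1]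
  · intro h
    linarith [hbig.1]
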